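/- Let ℏ, c, m₀ > 0 be real, set E₀ = m₀c² and l₀ = ℏ/(m₀c), and let N be a positive integer with N·l₀ < 1. Let f₁, …, f_N be complex numbers and define Y : ℝ × ℝ → ℂ by Y(x,t) = exp(−iE₀t/ℏ) Σ_{n=1}^{N} f_n exp( i E₀ l₀² n² t / (2ℏ√(1 − l₀²n²)) ) e^{−n x}. Then for all real x and t, the series Σ_{m=0}^∞ (−1)^{m+1} C(−1/2, m) l₀^{2m+2} ∂_x^{2m+2} Y(x,t) converges absolutely, and iℏ ∂_t Y(x,t) = E₀ Y(x,t) + (E₀/2) Σ_{m=0}^∞ (−1)^{m+1} C(−1/2, m) l₀^{2m+2} ∂_x^{2m+2} Y(x,t). -/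

import Mathlib

open scoped BigOperators

/-- The generalized binomial coefficient `C(−1/2, m) = (∏_{j=0}^{m−1} (−1/2 − j)) / m!`. -/
noncomputable def genBinomHalf (m : ℕ) : ℝ :=
  (∏ j ∈ Finset.range m, (-(1 : ℝ) / 2 - (j : ℝ))) / (m.factorial : ℝ)

noncomputable def cseq (m : ℕ) : ℝ := (-1)^m * genBinomHalf m

lemma cseq_zero : cseq 0 = 1 := by simp [cseq, genBinomHalf]

lemma cseq_succ (m : ℕ) : cseq (m+1) = cseq m * ((2*m+1)/(2*m+2)) := by
  have hf : ((m+1).factorial : ℝ) = (m+1) * m.factorial := by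
    rw [Nat.factorial_succ]; push_cast; ring
  have hm : (0:ℝ) < m.factorial := by positivity
  simp only [cseq, genBinomHalf, Finset.prod_range_succ, hf, pow_succ]
  field_simp
  ring

lemma cseq_nonneg (m : ℕ) : 0 ≤ cseq m := by
  induction m with
  | zero => rw [cseq_zero]; norm_num
  | succ m ih =>
    rw [cseq_succ]
    have : (0:ℝ) ≤ (2*m+1)/(2*m+2) := by positivity
    exact mul_nonneg ih this

lemma cseq_le_one (m : ℕ) : cseq m ≤ 1 := by
  induction m with
  | zero => rw [cseq_zero]
  | succ m ih =>
    rw [cseq_succ]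
    have h1 : (2*(m:ℝ)+1)/(2*m+2) ≤ 1 := by
      rw [div_le_one (by positivity)]; linarith
    calc cseq m * ((2*m+1)/(2*m+2)) ≤ 1 * 1 :=
          mul_le_mul ih h1 (by positivity) zero_le_one
      _ = 1 := one_mul 1

lemma cseq_rec (m : ℕ) : 2*(m+1) * cseq (m+1) = (2*m+1) * cseq m := by
  rw [cseq_succ]
  have : (2*(m:ℝ)+2) ≠ 0 := by positivity
  field_simp

lemma abs_cseq_le_one (m : ℕ) : |cseq m| ≤ 1 := by
  rw [abs_of_nonneg (cseq_nonneg m)]; exact cseq_le_one m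

/-- summability of `∑ cseq m * v^m` for `|v| < 1` -/
lemma summable_cseq_pow {v : ℝ} (hv : |v| < 1) : Summable (fun m => cseq m * v ^ m) := by
  apply Summable.of_norm_bounded (summable_geometric_of_lt_one (abs_nonneg v) hv)
  intro m
  rw [norm_mul, norm_pow]
  calc ‖cseq m‖ * ‖v‖ ^ m ≤ 1 * ‖v‖ ^ m := by
        apply mul_le_mul_of_nonneg_right (abs_cseq_le_one m) (by positivity)
    _ = |v| ^ m := by rw [one_mul]; rfl

lemma summable_m_cseq_pow {v : ℝ} (hv : |v| < 1) :
    Summable (fun m : ℕ => (m:ℝ) * cseq m * v ^ m) := by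
  apply Summable.of_norm_bounded (summable_pow_mul_geometric_of_norm_lt_one 1 (r := |v|) (by simpa using hv))
  intro m
  rw [norm_mul, norm_mul, norm_pow, Real.norm_natCast, pow_one, Real.norm_eq_abs, Real.norm_eq_abs]
  have h := mul_le_mul_of_nonneg_left (abs_cseq_le_one m) (Nat.cast_nonneg m : (0:ℝ) ≤ m)
  calc (m:ℝ) * |cseq m| * |v| ^ m ≤ ((m:ℝ) * 1) * |v| ^ m :=
        mul_le_mul_of_nonneg_right h (by positivity)
    _ = (m:ℝ) * |v| ^ m := by ring

noncomputable def gfun (v : ℝ) : ℝ := ∑' m : ℕ, cseq m * v ^ m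
noncomputable def gder (v : ℝ) : ℝ := ∑' m : ℕ, ((m:ℝ)+1) * cseq (m+1) * v ^ m

lemma summable_aux_geo {v : ℝ} (hv : |v| < 1) :
    Summable (fun m : ℕ => ((m:ℝ)+1) * |v| ^ m) := by
  have h1 : Summable (fun m : ℕ => (m:ℝ)^1 * |v| ^ m) :=
    summable_pow_mul_geometric_of_norm_lt_one 1 (r := |v|) (by simpa using hv)
  have h2 : Summable (fun m : ℕ => |v| ^ m) :=
    summable_geometric_of_lt_one (abs_nonneg v) hv
  exact Summable.congr (h1.add h2) (fun m => by ring)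

lemma summable_gder {v : ℝ} (hv : |v| < 1) :
    Summable (fun m : ℕ => ((m:ℝ)+1) * cseq (m+1) * v ^ m) := by
  apply Summable.of_norm_bounded (summable_aux_geo hv)
  intro m
  simp only [norm_mul, norm_pow]
  have h1 : ‖(m:ℝ)+1‖ = (m:ℝ)+1 := by rw [Real.norm_eq_abs, abs_of_nonneg (by positivity)]
  have hvv : ‖v‖ ^ m = |v| ^ m := rfl
  rw [h1, hvv]
  calc ((m:ℝ)+1) * ‖cseq (m+1)‖ * |v| ^ m ≤ ((m:ℝ)+1) * 1 * |v| ^ m := by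
        apply mul_le_mul_of_nonneg_right _ (by positivity)
        exact mul_le_mul_of_nonneg_left (abs_cseq_le_one _) (by positivity)
    _ = ((m:ℝ)+1) * |v| ^ m := by rw [mul_one]

lemma hasDerivAt_gfun {v : ℝ} (hv : |v| < 1) : HasDerivAt gfun (gder v) v := by
  set r : ℝ := (1 + |v|) / 2 with hr
  have hr0 : (1:ℝ)/2 ≤ r := by rw [hr]; have := abs_nonneg v; linarith
  have hr1 : r < 1 := by rw [hr]; linarith
  have hrpos : 0 < r := lt_of_lt_of_le (by norm_num) hr0
  have hvr : |v| < r := by rw [hr]; linarith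
  set F : ℕ → ℝ → ℝ := fun m x => cseq m * x ^ m with hF
  set F' : ℕ → ℝ → ℝ := fun m x => cseq m * ((m:ℝ) * x ^ (m-1)) with hF'
  set u : ℕ → ℝ := fun m => 2 * ((m:ℝ)^1 * r ^ m) with hu
  have hU : Summable u :=
    (summable_pow_mul_geometric_of_norm_lt_one 1
      (r := r) (by rw [Real.norm_eq_abs, abs_of_pos hrpos]; exact hr1)).mul_left 2
  have hder : ∀ m : ℕ, ∀ y : ℝ, y ∈ Metric.ball (0:ℝ) r → HasDerivAt (F m) (F' m y) y := by
    intro m y _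
    exact (hasDerivAt_pow m y).const_mul (cseq m)
  have hbound : ∀ m : ℕ, ∀ y : ℝ, y ∈ Metric.ball (0:ℝ) r → ‖F' m y‖ ≤ u m := by
    intro m y hy
    rw [Metric.mem_ball, dist_zero_right, Real.norm_eq_abs] at hy
    have hnorm : ‖F' m y‖ = |cseq m| * ((m:ℝ) * |y| ^ (m-1)) := by
      simp only [hF', norm_mul, Real.norm_natCast, norm_pow, Real.norm_eq_abs, Nat.abs_cast]
    rw [hnorm]
    rcases m with _ | k
    · simp [hu]
    · have hyk : |y| ^ k ≤ r ^ k := pow_le_pow_left₀ (abs_nonneg y) hy.le k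
      have h1 : |cseq (k+1)| * (((k+1:ℕ):ℝ) * |y| ^ (k+1-1)) ≤ 1 * (((k:ℝ)+1) * r ^ k) := by
        apply mul_le_mul (abs_cseq_le_one _) _ (by positivity) zero_le_one
        simp only [Nat.add_sub_cancel]
        push_cast
        exact mul_le_mul_of_nonneg_left hyk (by positivity)
      refine le_trans h1 ?_
      simp only [hu, pow_one]
      push_cast
      rw [pow_succ]
      nlinarith [mul_nonneg (mul_nonneg (by positivity : (0:ℝ) ≤ (k:ℝ)+1)
        (pow_nonneg hrpos.le k)) (by linarith : (0:ℝ) ≤ 2*r-1)]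
  have h0 : (0:ℝ) ∈ Metric.ball (0:ℝ) r := by simp [hrpos]
  have hvmem : v ∈ Metric.ball (0:ℝ) r := by
    rw [Metric.mem_ball, dist_zero_right, Real.norm_eq_abs]; exact hvr
  have hs0 : Summable fun m => F m 0 := by
    apply summable_of_ne_finset_zero (s := {0})
    intro m hm
    simp only [Finset.mem_singleton] at hm
    simp [hF, zero_pow hm]
  have key := hasDerivAt_tsum_of_isPreconnected hU Metric.isOpen_ball
    (convex_ball (0:ℝ) r).isPreconnected
    hder hbound h0 hs0 hvmem
  have hgf : gfun = fun z => ∑' m, F m z := by funext z; rfl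
  rw [hgf]
  refine key.congr_deriv (Eq.symm ?_)
  have hsum' : Summable fun m => F' m v := by
    apply Summable.of_norm_bounded hU
    intro m; exact hbound m v hvmem
  rw [Summable.tsum_eq_zero_add hsum']
  have hz : F' 0 v = 0 := by simp [hF']
  rw [hz, zero_add, gder]
  apply tsum_congr
  intro m
  simp only [hF']
  push_cast
  ring_nf

lemma ode_gfun {v : ℝ} (hv : |v| < 1) : 2*(1-v) * gder v = gfun v := by
  have hgd := summable_gder hv
  have hs2 : Summable (fun m : ℕ => 2*(m:ℝ) * cseq m * v ^ m) :=
    ((summable_m_cseq_pow hv).mul_left 2).congr (fun m => by ring)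
  have hs3 : Summable (fun m : ℕ => 2*((m:ℝ)+1) * cseq (m+1) * v ^ (m+1)) :=
    (hgd.mul_left (2*v)).congr (fun m => by rw [pow_succ]; ring)
  have key : (∑' m : ℕ, 2*(m:ℝ)*cseq m*v^m) = ∑' m : ℕ, 2*((m:ℝ)+1)*cseq (m+1)*v^(m+1) := by
    rw [Summable.tsum_eq_zero_add hs2]
    have h0 : 2*((0:ℕ):ℝ)*cseq 0*v^0 = 0 := by norm_num
    rw [h0, zero_add]
    apply tsum_congr; intro m; push_cast; ring
  have hzero : ∑' m : ℕ, (2*(m:ℝ)*cseq m*v^m - 2*((m:ℝ)+1)*cseq (m+1)*v^(m+1)) = 0 := by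
    rw [Summable.tsum_sub hs2 hs3, key, sub_self]
  have split : ∀ m : ℕ, 2*(1-v) * (((m:ℝ)+1) * cseq (m+1) * v ^ m)
      = cseq m * v ^ m + (2*(m:ℝ)*cseq m*v^m - 2*((m:ℝ)+1)*cseq (m+1)*v^(m+1)) := by
    intro m
    have h := cseq_rec m
    rw [pow_succ]
    linear_combination v ^ m * h
  calc 2*(1-v) * gder v = ∑' m : ℕ, 2*(1-v) * (((m:ℝ)+1) * cseq (m+1) * v ^ m) := by
        rw [gder, ← tsum_mul_left]
    _ = ∑' m : ℕ, (cseq m * v ^ m + (2*(m:ℝ)*cseq m*v^m - 2*((m:ℝ)+1)*cseq (m+1)*v^(m+1))) :=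
        tsum_congr split
    _ = gfun v + ∑' m : ℕ, (2*(m:ℝ)*cseq m*v^m - 2*((m:ℝ)+1)*cseq (m+1)*v^(m+1)) :=
        Summable.tsum_add (summable_cseq_pow hv) (hs2.sub hs3)
    _ = gfun v := by rw [hzero, add_zero]

lemma gfun_zero : gfun 0 = 1 := by
  rw [gfun, tsum_eq_single 0 (fun b hb => by simp [zero_pow hb])]
  simp [cseq_zero]

lemma gfun_eq {v : ℝ} (h0 : 0 ≤ v) (h1 : v < 1) : gfun v = (Real.sqrt (1-v))⁻¹ := by
  have habs : ∀ x ∈ Set.Icc 0 v, |x| < 1 := fun x hx => by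
    rw [abs_of_nonneg hx.1]; exact lt_of_le_of_lt hx.2 h1
  have hderiv : ∀ x ∈ Set.Icc 0 v, HasDerivAt (fun x => gfun x ^ 2 * (1-x)) 0 x := by
    intro x hx
    have hg := hasDerivAt_gfun (habs x hx)
    have h := (hg.pow 2).mul ((hasDerivAt_id x).const_sub 1)
    refine h.congr_deriv (Eq.symm ?_)
    have hode := ode_gfun (habs x hx)
    norm_num
    linear_combination (-(gfun x)) * hode
  have hcont : ContinuousOn (fun x => gfun x ^ 2 * (1-x)) (Set.Icc 0 v) :=
    fun x hx => ((hderiv x hx).continuousAt).continuousWithinAt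
  have hder2 : ∀ x ∈ Set.Ico 0 v, HasDerivWithinAt (fun x => gfun x ^ 2 * (1-x)) 0 (Set.Ici x) x :=
    fun x hx => ((hderiv x ⟨hx.1, hx.2.le⟩).hasDerivWithinAt)
  have hconst := constant_of_has_deriv_right_zero hcont hder2 v (Set.right_mem_Icc.2 h0)
  have key : gfun v ^ 2 * (1-v) = 1 := by
    simpa [gfun_zero] using hconst
  have h1v : 0 < 1 - v := by linarith
  have hgnn : 0 ≤ gfun v := tsum_nonneg fun m => mul_nonneg (cseq_nonneg m) (pow_nonneg h0 m)
  have hnn : 0 ≤ gfun v * Real.sqrt (1-v) := mul_nonneg hgnn (Real.sqrt_nonneg _)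
  have hsq : (gfun v * Real.sqrt (1-v))^2 = 1 := by
    rw [mul_pow, Real.sq_sqrt h1v.le, key]
  have h2 : gfun v * Real.sqrt (1-v) = 1 := by
    calc gfun v * Real.sqrt (1-v) = Real.sqrt ((gfun v * Real.sqrt (1-v))^2) :=
          (Real.sqrt_sq hnn).symm
      _ = Real.sqrt 1 := by rw [hsq]
      _ = 1 := Real.sqrt_one
  exact eq_inv_of_mul_eq_one_left h2

lemma hasDerivAt_cexp_mul (a : ℂ) (x : ℝ) :
    HasDerivAt (fun s : ℝ => Complex.exp (a * s)) (a * Complex.exp (a * x)) x := by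
  have h0 : HasDerivAt (fun s : ℝ => (s : ℂ)) 1 x := by
    exact Complex.ofRealCLM.hasDerivAt (x := x)
  have h : HasDerivAt (fun s : ℝ => a * (s : ℂ)) a x := by
    simpa using h0.const_mul a
  simpa [mul_comm] using h.cexp

lemma iter_deriv_exp_sum (S : Finset ℕ) (A : ℂ) (c : ℕ → ℂ) (a : ℕ → ℂ) (k : ℕ) :
    iteratedDeriv k (fun x' : ℝ => A * ∑ n ∈ S, c n * Complex.exp (a n * x')) =
      fun x' : ℝ => A * ∑ n ∈ S, c n * (a n)^k * Complex.exp (a n * x') := by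
  induction k with
  | zero => simp
  | succ k ih =>
    rw [iteratedDeriv_succ, ih]
    funext x'
    have hterm : ∀ n ∈ S, HasDerivAt
        (fun y : ℝ => c n * (a n)^k * Complex.exp (a n * y))
        (c n * (a n)^(k+1) * Complex.exp (a n * x')) x' := by
      intro n _
      have := (hasDerivAt_cexp_mul (a n) x').const_mul (c n * (a n)^k)
      refine this.congr_deriv (Eq.symm ?_)
      rw [pow_succ]; ring
    have hsum := HasDerivAt.fun_sum hterm
    exact ((hsum.const_mul A)).deriv

/-- **Theorem 2 of the paper.**  The explicit wave
`Y(x,t) = exp(−iE₀t/ℏ) Σ_{n=1}^{N} fₙ exp(iE₀l₀²n²t/(2ℏ√(1−l₀²n²))) e^{−nx}`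
solves the infinite-order relativistic wave equation
`iℏ ∂ₜY = E₀Y + (E₀/2) Σ_{m≥0} (−1)^{m+1} C(−1/2,m) l₀^{2m+2} ∂ₓ^{2m+2} Y`,
the series converging absolutely. -/
theorem stmt3 (ℏ c m₀ : ℝ) (hℏ : 0 < ℏ) (hc : 0 < c) (hm₀ : 0 < m₀)
    (E₀ l₀ : ℝ) (hE₀ : E₀ = m₀ * c ^ 2) (hl₀ : l₀ = ℏ / (m₀ * c))
    (N : ℕ) (hN : 0 < N) (hNl : (N : ℝ) * l₀ < 1)
    (f : ℕ → ℂ) (Y : ℝ → ℝ → ℂ)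
    (hY : ∀ x t : ℝ, Y x t =
      Complex.exp (-Complex.I * E₀ * t / ℏ) *
        ∑ n ∈ Finset.Icc 1 N,
          f n *
            Complex.exp (Complex.I * E₀ * l₀ ^ 2 * (n : ℂ) ^ 2 * t /
              (2 * ℏ * (Real.sqrt (1 - l₀ ^ 2 * (n : ℝ) ^ 2) : ℂ))) *
            Complex.exp (-(n : ℂ) * x)) :
    ∀ x t : ℝ,
      Summable (fun m : ℕ =>
        ‖(-1 : ℂ) ^ (m + 1) * (genBinomHalf m : ℂ) * (l₀ : ℂ) ^ (2 * m + 2) *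
            iteratedDeriv (2 * m + 2) (fun x' : ℝ => Y x' t) x‖) ∧
      Complex.I * ℏ * deriv (fun t' : ℝ => Y x t') t =
        (E₀ : ℂ) * Y x t +
          ((E₀ : ℂ) / 2) *
            ∑' m : ℕ,
              (-1 : ℂ) ^ (m + 1) * (genBinomHalf m : ℂ) * (l₀ : ℂ) ^ (2 * m + 2) *
                iteratedDeriv (2 * m + 2) (fun x' : ℝ => Y x' t) x := by
  intro x t
  have hl₀pos : 0 < l₀ := by rw [hl₀]; positivity
  set S : Finset ℕ := Finset.Icc 1 N with hS
  have hq1 : ∀ n ∈ S, (l₀ * (n:ℝ))^2 < 1 := by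
    intro n hn
    rw [hS, Finset.mem_Icc] at hn
    have h1 : (0:ℝ) ≤ l₀ * n := by positivity
    have h2 : l₀ * (n:ℝ) < 1 := by
      have : (n:ℝ) ≤ N := Nat.cast_le.mpr hn.2
      nlinarith
    exact pow_lt_one₀ h1 h2 (by norm_num)
  have hsub : ∀ n : ℕ, 1 - l₀^2 * (n:ℝ)^2 = 1 - (l₀ * (n:ℝ))^2 := by intro n; ring
  have hsqpos : ∀ n ∈ S, 0 < Real.sqrt (1 - l₀^2 * (n:ℝ)^2) := by
    intro n hn
    apply Real.sqrt_pos.mpr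
    rw [hsub n]
    linarith [hq1 n hn]
  set α : ℂ := -Complex.I * E₀ / ℏ with hα
  set β : ℕ → ℂ := fun n =>
    Complex.I * E₀ * l₀^2 * (n:ℂ)^2 / (2 * ℏ * (Real.sqrt (1 - l₀^2 * (n:ℝ)^2) : ℂ)) with hβ
  set γ : ℕ → ℂ := fun n => α + β n with hγ
  set En : ℕ → ℂ := fun n => Complex.exp (-(n:ℂ) * x) with hEn
  set P : ℕ → ℂ := fun n => f n * Complex.exp (γ n * t) * En n with hP
  set A : ℂ := Complex.exp (-Complex.I * E₀ * t / ℏ) with hA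
  set cc : ℕ → ℂ := fun n => f n *
    Complex.exp (Complex.I * E₀ * l₀^2 * (n:ℂ)^2 * t /
      (2 * ℏ * (Real.sqrt (1 - l₀^2 * (n:ℝ)^2) : ℂ))) with hcc
  have hAexp : A = Complex.exp (α * t) := by rw [hA]; congr 1; simp only [hα]; ring
  have hccexp : ∀ n : ℕ, cc n = f n * Complex.exp (β n * t) := by
    intro n; simp only [hcc, hβ]; congr 2; ring
  have hAP : ∀ n : ℕ, A * cc n * En n = P n := by
    intro n
    simp only [hP, hAexp, hccexp n]
    have hgt : γ n * (t:ℂ) = α * t + β n * t := by simp only [hγ]; ring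
    rw [hgt, Complex.exp_add]
    ring
  -- time derivative
  have hYt : (fun t' : ℝ => Y x t') =
      fun t' : ℝ => ∑ n ∈ S, (f n * En n) * Complex.exp (γ n * (t' : ℂ)) := by
    funext t'
    rw [hY x t', Finset.mul_sum]
    apply Finset.sum_congr rfl
    intro n _
    have h1 : Complex.exp (-Complex.I * E₀ * t' / ℏ) *
        Complex.exp (Complex.I * E₀ * l₀^2 * (n:ℂ)^2 * t' /
          (2 * ℏ * (Real.sqrt (1 - l₀^2 * (n:ℝ)^2) : ℂ))) = Complex.exp (γ n * t') := by
      rw [← Complex.exp_add]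
      congr 1
      simp only [hγ, hα, hβ]
      ring
    rw [← h1]
    simp only [hEn]
    ring
  have hderiv_t : HasDerivAt (fun t' : ℝ => Y x t') (∑ n ∈ S, γ n * P n) t := by
    rw [hYt]
    apply HasDerivAt.fun_sum
    intro n _
    have h := (hasDerivAt_cexp_mul (γ n) t).const_mul (f n * En n)
    refine h.congr_deriv (Eq.symm ?_)
    simp only [hP]
    ring
  -- space derivatives
  have hYx : (fun x' : ℝ => Y x' t) =
      fun x' : ℝ => A * ∑ n ∈ S, cc n * Complex.exp ((-(n:ℂ)) * (x' : ℂ)) := by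
    funext x'
    exact hY x' t
  have hiter : ∀ k : ℕ, iteratedDeriv k (fun x' : ℝ => Y x' t) x
      = A * ∑ n ∈ S, cc n * (-(n:ℂ))^k * En n := by
    intro k
    rw [hYx, iter_deriv_exp_sum S A cc (fun n => -(n:ℂ)) k]
  -- real coefficient series
  set q : ℕ → ℝ := fun n => (l₀ * (n:ℝ))^2 with hqdef
  set r : ℕ → ℕ → ℝ := fun n m => (-1:ℝ)^(m+1) * genBinomHalf m * (l₀ * (n:ℝ))^(2*m+2) with hrdef
  have hrq : ∀ n m, r n m = (cseq m * (q n)^m) * (-(q n)) := by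
    intro n m
    simp only [hrdef, hqdef, cseq]
    rw [← pow_mul]
    ring
  have habsq : ∀ n ∈ S, |q n| < 1 := by
    intro n hn
    rw [abs_of_nonneg (sq_nonneg (l₀ * (n:ℝ)))]
    exact hq1 n hn
  have hrsum : ∀ n ∈ S, Summable (fun m => r n m) := by
    intro n hn
    exact ((summable_cseq_pow (habsq n hn)).mul_right (-(q n))).congr
      (fun m => (hrq n m).symm)
  have hrval : ∀ n ∈ S, ∑' m : ℕ, r n m
      = -(q n) * (Real.sqrt (1 - l₀^2 * (n:ℝ)^2))⁻¹ := by
    intro n hn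
    calc ∑' m : ℕ, r n m = ∑' m : ℕ, (-(q n)) * (cseq m * (q n)^m) :=
          tsum_congr fun m => by rw [hrq]; ring
      _ = (-(q n)) * gfun (q n) := by rw [tsum_mul_left]; rw [gfun]
      _ = -(q n) * (Real.sqrt (1 - q n))⁻¹ := by
          rw [gfun_eq (sq_nonneg (l₀ * (n:ℝ))) (hq1 n hn)]
      _ = -(q n) * (Real.sqrt (1 - l₀^2 * (n:ℝ)^2))⁻¹ := by
          simp only [hqdef]
          rw [hsub n]
  -- complex per-n series
  set G : ℕ → ℕ → ℂ := fun n m => (A * cc n * En n) * ((r n m : ℝ) : ℂ) with hGdef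
  have hGsum : ∀ n ∈ S, Summable (fun m => G n m) := fun n hn =>
    (Complex.summable_ofReal.mpr (hrsum n hn)).mul_left _
  have hGnormsum : ∀ n ∈ S, Summable (fun m => ‖G n m‖) := by
    intro n hn
    have hnonpos : ∀ m, r n m ≤ 0 := by
      intro m
      rw [hrq]
      have h1 : 0 ≤ cseq m * (q n)^m :=
        mul_nonneg (cseq_nonneg m) (pow_nonneg (sq_nonneg (l₀ * (n:ℝ))) m)
      have h2 : (0:ℝ) ≤ q n := sq_nonneg (l₀ * (n:ℝ))
      exact mul_nonpos_of_nonneg_of_nonpos h1 (by linarith)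
    have heq : (fun m => ‖G n m‖) = fun m => ‖A * cc n * En n‖ * |r n m| := by
      funext m
      simp only [hGdef, norm_mul, Complex.norm_real, Real.norm_eq_abs]
    rw [heq]
    apply Summable.mul_left
    exact ((hrsum n hn).neg).congr (fun m => (abs_of_nonpos (hnonpos m)).symm)
  -- decomposition of the m-th term
  have hT : ∀ m : ℕ, (-1:ℂ)^(m+1) * (genBinomHalf m : ℂ) * (l₀:ℂ)^(2*m+2) *
      iteratedDeriv (2*m+2) (fun x' : ℝ => Y x' t) x = ∑ n ∈ S, G n m := by
    intro m
    rw [hiter (2*m+2), Finset.mul_sum, Finset.mul_sum]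
    apply Finset.sum_congr rfl
    intro n _
    have heven : (-(n:ℂ))^(2*m+2) = (n:ℂ)^(2*m+2) := Even.neg_pow ⟨m+1, by ring⟩ _
    simp only [hGdef, hrdef]
    rw [heven]
    push_cast
    ring
  refine ⟨?_, ?_⟩
  · apply Summable.of_nonneg_of_le (fun m => norm_nonneg _) (fun m => ?_)
      (summable_sum (fun n hn => hGnormsum n hn))
    rw [hT m]
    exact norm_sum_le S (fun n => G n m)
  · have hscal : ∀ n ∈ S, Complex.I * ℏ * γ n
        = (E₀:ℂ) + (E₀:ℂ)/2 * ((-(q n) * (Real.sqrt (1 - l₀^2 * (n:ℝ)^2))⁻¹ : ℝ) : ℂ) := by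
      intro n hn
      have hsqn : ((Real.sqrt (1 - l₀^2 * (n:ℝ)^2) : ℝ) : ℂ) ≠ 0 := by
        exact_mod_cast (hsqpos n hn).ne'
      have hℏc : (ℏ:ℂ) ≠ 0 := by exact_mod_cast hℏ.ne'
      simp only [hγ, hα, hβ, hqdef]
      push_cast
      field_simp
      ring_nf
      simp only [Complex.I_sq]
      ring
    have htsum : (∑' m : ℕ,
        (-1 : ℂ) ^ (m + 1) * (genBinomHalf m : ℂ) * (l₀ : ℂ) ^ (2 * m + 2) *
          iteratedDeriv (2 * m + 2) (fun x' : ℝ => Y x' t) x)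
        = ∑ n ∈ S, (A * cc n * En n) * ((∑' m : ℕ, r n m : ℝ) : ℂ) := by
      rw [tsum_congr hT, Summable.tsum_finsetSum (fun n hn => hGsum n hn)]
      apply Finset.sum_congr rfl
      intro n hn
      simp only [hGdef]
      rw [tsum_mul_left, ← Complex.ofReal_tsum]
    have hYval : Y x t = ∑ n ∈ S, P n := by
      rw [hY x t, Finset.mul_sum]
      apply Finset.sum_congr rfl
      intro n _
      rw [← hAP n]
      simp only [hcc, hEn]
      ring
    rw [hderiv_t.deriv, htsum, hYval, Finset.mul_sum, Finset.mul_sum, Finset.mul_sum,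
      ← Finset.sum_add_distrib]
    apply Finset.sum_congr rfl
    intro n hn
    calc Complex.I * ℏ * (γ n * P n) = (Complex.I * ℏ * γ n) * P n := by ring
      _ = ((E₀:ℂ) + (E₀:ℂ)/2 *
            ((-(q n) * (Real.sqrt (1 - l₀^2 * (n:ℝ)^2))⁻¹ : ℝ) : ℂ)) * P n := by
          rw [hscal n hn]
      _ = (E₀:ℂ) * P n + (E₀:ℂ)/2 * ((A * cc n * En n) * ((∑' m : ℕ, r n m : ℝ) : ℂ)) := by
          rw [hAP n, hrval n hn]
          ring
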